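/- Let (W, θ) be a nondegenerate TLN with uniform input θ > 0 and a partition of nodes τ_1,...,τ_N where each τ_ℓ is simply-embedded. Characterize fixed point supports via sign conditions: σ ∈ FP(W, θ) iff sgn s_i^σ = sgn s_j^σ = -sgn s_k^σ for all i, j ∈ σ and k ∉ σ. Then every σ ∈ FP(W, θ) satisfies σ ∩ τ_ℓ ∈ FP(W_{τ_ℓ}, θ) ∪ {∅} for all ℓ ∈ [N]; i.e., every global fixed point support is a union of component fixed point supports, at most one per component. -/

import Mathlib

/-- Cramer's determinant s_i^σ = det((I - W_{σ∪{i}})_i ; θ·𝟙). -/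
noncomputable def sdet {ι : Type*} [Fintype ι] [DecidableEq ι]
    (W : Matrix ι ι ℝ) (θ : ℝ) (σ : Finset ι) (i : ι) : ℝ :=
  Matrix.det (Matrix.of (fun a b : {x // x ∈ insert i σ} =>
    if (b : ι) = i then θ
    else (if (a : ι) = (b : ι) then (1 : ℝ) else 0) - W (a : ι) (b : ι)))

/-- Sign-conditions characterization of fixed point supports: a nonempty σ is in
FP(W, θ) iff all s_i^σ for i ∈ σ share one sign and every s_k^σ for k ∉ σ has the
opposite sign. -/
def signFP {ι : Type*} [Fintype ι] [DecidableEq ι]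
    (W : Matrix ι ι ℝ) (θ : ℝ) (σ : Finset ι) : Prop :=
  σ.Nonempty ∧
    (∀ i ∈ σ, ∀ j ∈ σ, Real.sign (sdet W θ σ i) = Real.sign (sdet W θ σ j)) ∧
    (∀ i ∈ σ, ∀ k, k ∉ σ → Real.sign (sdet W θ σ k) = - Real.sign (sdet W θ σ i))

lemma real_sign_mul (a b : ℝ) : Real.sign (a * b) = Real.sign a * Real.sign b := by
  rcases lt_trichotomy a 0 with ha | ha | ha <;>
    rcases lt_trichotomy b 0 with hb | hb | hb <;>
    simp [ha, hb, Real.sign_of_pos, Real.sign_of_neg, Real.sign_zero,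
      mul_pos, mul_pos_of_neg_of_neg, mul_neg_of_pos_of_neg, mul_neg_of_neg_of_pos]

/-- The key determinant factorization for a simply-embedded component `T`:
for `i ∈ T`, the Cramer determinant of the full network factors as a determinant
living on `σ \ T` times the Cramer determinant of the restricted network on `T`. -/
lemma sdet_factor {ι : Type*} [Fintype ι] [DecidableEq ι]
    (W : Matrix ι ι ℝ) (θ : ℝ) (hθ : θ ≠ 0) (T σ : Finset ι)
    (hseT : ∀ j ∉ T, ∀ a ∈ T, ∀ k ∈ T, W a j = W k j)
    (i : ι) (hi : i ∈ T) :
    sdet W θ σ i =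
      Matrix.det (Matrix.of fun a b : {x // x ∈ σ \ T} =>
        ((if (a : ι) = (b : ι) then (1 : ℝ) else 0) - W (a : ι) (b : ι)) + W i (b : ι)) *
      sdet (W.submatrix (Subtype.val : {x // x ∈ T} → ι) Subtype.val) θ
        (σ.subtype (· ∈ T)) ⟨i, hi⟩ := by
  classical
  set κ := {x // x ∈ insert i σ} with hκ
  set M : Matrix κ κ ℝ := Matrix.of (fun a b : κ =>
    if (b : ι) = i then θ
    else (if (a : ι) = (b : ι) then (1 : ℝ) else 0) - W (a : ι) (b : ι)) with hM
  have hiκ : i ∈ insert i σ := Finset.mem_insert_self i σ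
  set iκ : κ := ⟨i, hiκ⟩ with hiκdef
  set v' : κ → ℝ := fun b => if (b : ι) ∈ T then 0 else W i (b : ι) / θ with hv'
  set E : Matrix κ κ ℝ := Matrix.of (fun a b : κ =>
    (if a = b then (1 : ℝ) else 0) + (if a = iκ then v' b else 0)) with hE
  -- E has determinant 1
  have hEeq : E = (1 : Matrix κ κ ℝ).updateRow iκ ((1 : Matrix κ κ ℝ) iκ + v') := by
    ext a b
    by_cases h : a = iκ <;>
      simp [hE, Matrix.updateRow_apply, Matrix.one_apply, h]
  have hdetE : E.det = 1 := by
    rw [hEeq, Matrix.det_updateRow_add, Matrix.updateRow_eq_self, Matrix.det_one]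
    have h0 : ((1 : Matrix κ κ ℝ).updateRow iκ v').det = 0 := by
      apply Matrix.det_eq_zero_of_column_eq_zero iκ
      intro a
      by_cases h : a = iκ
      · subst h; simp [hv', hi, hiκdef]
      · simp [Matrix.updateRow_ne h, Matrix.one_apply_ne h]
    rw [h0, add_zero]
  -- F = M * E
  set F : Matrix κ κ ℝ := Matrix.of (fun a b : κ =>
    M a b + (if (b : ι) ∈ T then 0 else W i (b : ι))) with hF
  have hcoli : ∀ a : κ, M a iκ = θ := by
    intro a; simp [hM, hiκdef]
  have hME : M * E = F := by
    ext a b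
    have : ∀ c : κ, M a c * E c b =
        (if c = b then M a b else 0) + (if c = iκ then M a iκ * v' b else 0) := by
      intro c
      simp only [hE, Matrix.of_apply, mul_add]
      congr 1
      · by_cases h1 : c = b
        · subst h1; simp
        · simp [h1]
      · by_cases h2 : c = iκ
        · subst h2; simp
        · simp [h2]
    simp only [Matrix.mul_apply, this, Finset.sum_add_distrib, Finset.sum_ite_eq',
      Finset.mem_univ, if_true]
    rw [hcoli a]
    by_cases hbT : (b : ι) ∈ T <;> simp [hF, hv', hbT, mul_div_cancel₀ _ hθ, hiκdef] <;>
      repeat' erw [Finset.sum_ite_eq'] <;> simp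
  have hdetMF : M.det = F.det := by
    rw [← hME, Matrix.det_mul, hdetE, mul_one]
  -- block structure
  set P : κ → Prop := fun a => (a : ι) ∈ T with hP
  have : DecidablePred P := fun a => by unfold P; infer_instance
  set e : {a : κ // ¬ P a} ⊕ {a : κ // P a} ≃ κ :=
    (Equiv.sumComm _ _).trans (Equiv.sumCompl P) with he
  set A' : Matrix {a : κ // ¬ P a} {a : κ // ¬ P a} ℝ :=
    Matrix.of (fun a b => F (a : κ) (b : κ)) with hA'
  set B' : Matrix {a : κ // ¬ P a} {a : κ // P a} ℝ :=
    Matrix.of (fun a b => F (a : κ) (b : κ)) with hB'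
  set D' : Matrix {a : κ // P a} {a : κ // P a} ℝ :=
    Matrix.of (fun a b => F (a : κ) (b : κ)) with hD'
  have hzero : ∀ (a b : κ), P a → ¬ P b → F a b = 0 := by
    intro a b ha hb
    have haT : (a : ι) ∈ T := ha
    have hbT : (b : ι) ∉ T := hb
    have hbi : (b : ι) ≠ i := fun h => hbT (by rw [h]; exact hi)
    have hab : (a : ι) ≠ (b : ι) := fun h => hbT (by rw [← h]; exact haT)
    have hw : W (a : ι) (b : ι) = W i (b : ι) := hseT _ hbT _ haT _ hi
    simp [hF, hM, hbi, hab, hbT, hw]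
    exact fun h => hab (congrArg Subtype.val h)
  have hFblocks : F.submatrix e e = Matrix.fromBlocks A' B' 0 D' := by
    ext x y
    rcases x with a | a <;> rcases y with b | b <;>
      simp only [Matrix.submatrix_apply, he, Equiv.trans_apply, Equiv.sumComm_apply,
        Sum.swap_inl, Sum.swap_inr, Equiv.sumCompl_apply_inl, Equiv.sumCompl_apply_inr,
        Matrix.fromBlocks_apply₁₁, Matrix.fromBlocks_apply₁₂, Matrix.fromBlocks_apply₂₁,
        Matrix.fromBlocks_apply₂₂, Matrix.of_apply, Matrix.zero_apply] <;>
      first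
        | rfl
        | exact hzero _ _ a.2 b.2
  have hdetF : F.det = A'.det * D'.det := by
    rw [← Matrix.det_submatrix_equiv_self e F, hFblocks, Matrix.det_fromBlocks_zero₂₁]
  -- identify A' with the matrix on σ \ T
  let e₁ : {x // x ∈ σ \ T} ≃ {a : κ // ¬ P a} :=
    { toFun := fun x => ⟨⟨(x : ι), Finset.mem_insert_of_mem (Finset.mem_sdiff.mp x.2).1⟩,
        (Finset.mem_sdiff.mp x.2).2⟩
      invFun := fun a => ⟨((a : κ) : ι), Finset.mem_sdiff.mpr
        ⟨(Finset.mem_insert.mp (a : κ).2).resolve_left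
          (fun h => a.2 (show (((a : κ) : ι)) ∈ T by rw [h]; exact hi)), a.2⟩⟩
      left_inv := fun x => rfl
      right_inv := fun a => rfl }
  have hdetA' : A'.det =
      Matrix.det (Matrix.of fun a b : {x // x ∈ σ \ T} =>
        ((if (a : ι) = (b : ι) then (1 : ℝ) else 0) - W (a : ι) (b : ι)) + W i (b : ι)) := by
    rw [← Matrix.det_submatrix_equiv_self e₁ A']
    congr 1
    ext a b
    have hbT : (b : ι) ∉ T := (Finset.mem_sdiff.mp b.2).2
    have hbi : (b : ι) ≠ i := fun h => hbT (by rw [← h] at hi; exact hi)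
    show (if (b : ι) = i then θ
          else (if (a : ι) = (b : ι) then (1 : ℝ) else 0) - W (a : ι) (b : ι))
        + (if (b : ι) ∈ T then 0 else W i (b : ι))
      = ((if (a : ι) = (b : ι) then (1 : ℝ) else 0) - W (a : ι) (b : ι)) + W i (b : ι)
    rw [if_neg hbi, if_neg hbT]
  -- identify D' with the sdet matrix of the restricted network
  set Tsub := {x // x ∈ T} with hTsub
  set iT : Tsub := ⟨i, hi⟩ with hiT
  set σT : Finset Tsub := σ.subtype (· ∈ T) with hσT
  let e₂ : {y : Tsub // y ∈ insert iT σT} ≃ {a : κ // P a} :=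
    { toFun := fun y => ⟨⟨(((y : {y : Tsub // y ∈ insert iT σT}) : Tsub) : ι), by
        rcases Finset.mem_insert.mp y.2 with h | h
        · rw [h]; exact hiκ
        · exact Finset.mem_insert_of_mem (Finset.mem_subtype.mp h)⟩,
        ((y : {y : Tsub // y ∈ insert iT σT}) : Tsub).2⟩
      invFun := fun a => ⟨⟨((a : κ) : ι), a.2⟩, by
        rcases Finset.mem_insert.mp (a : κ).2 with h | h
        · have : (⟨((a : κ) : ι), a.2⟩ : Tsub) = iT := Subtype.ext h
          rw [this]; exact Finset.mem_insert_self _ _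
        · exact Finset.mem_insert_of_mem (Finset.mem_subtype.mpr h)⟩
      left_inv := fun y => rfl
      right_inv := fun a => rfl }
  have hiTval : (iT : ι) = i := rfl
  have hdetD' : D'.det =
      sdet (W.submatrix (Subtype.val : Tsub → ι) Subtype.val) θ σT iT := by
    rw [← Matrix.det_submatrix_equiv_self e₂ D']
    unfold sdet
    congr 1
    ext a b
    rcases a with ⟨av, hav⟩
    rcases b with ⟨bv, hbv⟩
    have hbT : (bv : ι) ∈ T := bv.2
    show (if (bv : ι) = i then θ
          else (if (av : ι) = (bv : ι) then (1 : ℝ) else 0) - W (av : ι) (bv : ι))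
        + (if (bv : ι) ∈ T then 0 else W i (bv : ι))
      = if bv = iT then θ
          else (if av = bv then (1 : ℝ) else 0) -
            (W.submatrix (Subtype.val : Tsub → ι) Subtype.val) av bv
    have hcb : (bv = iT) ↔ ((bv : ι) = i) := ⟨fun h => by rw [h], fun h => Subtype.ext h⟩
    have hca : (av = bv) ↔ ((av : ι) = (bv : ι)) := ⟨fun h => by rw [h], fun h => Subtype.ext h⟩
    rw [if_pos hbT, add_zero]
    simp only [Matrix.submatrix_apply]
    by_cases hb : (bv : ι) = i
    · simp [hb, hcb.mpr hb, hiT]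
    · have hb' : ¬ (bv = iT) := fun h => hb (hcb.mp h)
      by_cases hab : (av : ι) = (bv : ι)
      · simp [hb, hb', hab, hca.mpr hab]
      · have hab' : ¬ (av = bv) := fun h => hab (hca.mp h)
        simp [hb, hb', hab, hab']
  have hfin : sdet W θ σ i = M.det := rfl
  rw [hfin, hdetMF, hdetF, hdetA', hdetD']

/-- Menu theorem for simply-embedded partitions (TLN version): if the nodes of a
nondegenerate TLN (W, θ), θ > 0 uniform, are partitioned into simply-embedded
components τ_1,...,τ_N, then every fixed point support σ ∈ FP(W, θ) satisfies
σ ∩ τ_ℓ ∈ FP(W_{τ_ℓ}, θ) ∪ {∅} for every component ℓ. -/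
theorem simply_embedded_menu (n N : ℕ)
    (W : Matrix (Fin n) (Fin n) ℝ) (θ : ℝ) (hθ : 0 < θ)
    (τ : Fin N → Finset (Fin n))
    (hdisj : ∀ ℓ ℓ', ℓ ≠ ℓ' → Disjoint (τ ℓ) (τ ℓ'))
    (hcover : ∀ i : Fin n, ∃ ℓ, i ∈ τ ℓ)
    (hse : ∀ ℓ, ∀ j ∉ τ ℓ, ∀ i ∈ τ ℓ, ∀ k ∈ τ ℓ, W i j = W k j)
    (hnd : ∀ (ρ : Finset (Fin n)) (i : Fin n), sdet W θ ρ i ≠ 0)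
    (σ : Finset (Fin n)) (hσ : signFP W θ σ) (ℓ : Fin N) :
    σ ∩ τ ℓ = ∅ ∨
      signFP (W.submatrix (Subtype.val : {x // x ∈ τ ℓ} → Fin n) Subtype.val) θ
        (σ.subtype (· ∈ τ ℓ)) := by
  classical
  by_cases hempty : σ ∩ τ ℓ = ∅
  · exact Or.inl hempty
  right
  obtain ⟨i₀, hi₀⟩ := Finset.nonempty_iff_ne_empty.mpr hempty
  have hi₀σ : i₀ ∈ σ := (Finset.mem_inter.mp hi₀).1
  have hi₀τ : i₀ ∈ τ ℓ := (Finset.mem_inter.mp hi₀).2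
  set W' := W.submatrix (Subtype.val : {x // x ∈ τ ℓ} → Fin n) Subtype.val with hW'
  set σ' : Finset {x // x ∈ τ ℓ} := σ.subtype (· ∈ τ ℓ) with hσ'
  set K : ℝ := Matrix.det (Matrix.of fun a b : {x // x ∈ σ \ τ ℓ} =>
    ((if (a : Fin n) = (b : Fin n) then (1 : ℝ) else 0) - W (a : Fin n) (b : Fin n))
      + W i₀ (b : Fin n)) with hK
  have key : ∀ i : Fin n, ∀ hi : i ∈ τ ℓ,
      sdet W θ σ i = K * sdet W' θ σ' ⟨i, hi⟩ := by
    intro i hi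
    rw [sdet_factor W θ (ne_of_gt hθ) (τ ℓ) σ (hse ℓ) i hi]
    congr 2
    ext a b
    have hbT : (b : Fin n) ∉ τ ℓ := (Finset.mem_sdiff.mp b.2).2
    simp only [Matrix.of_apply]
    rw [hse ℓ _ hbT i hi i₀ hi₀τ]
  have hKne : K ≠ 0 := by
    intro h
    exact hnd σ i₀ (by rw [key i₀ hi₀τ, h, zero_mul])
  have hsK : Real.sign K ≠ 0 := fun h => hKne (Real.sign_eq_zero_iff.mp h)
  have hsgn : ∀ i : Fin n, ∀ hi : i ∈ τ ℓ,
      Real.sign (sdet W θ σ i) = Real.sign K * Real.sign (sdet W' θ σ' ⟨i, hi⟩) := by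
    intro i hi
    rw [key i hi, real_sign_mul]
  refine ⟨⟨⟨i₀, hi₀τ⟩, Finset.mem_subtype.mpr hi₀σ⟩, ?_, ?_⟩
  · intro i' hi' j' hj'
    have h1 : (i' : Fin n) ∈ σ := Finset.mem_subtype.mp hi'
    have h2 : (j' : Fin n) ∈ σ := Finset.mem_subtype.mp hj'
    have := hσ.2.1 (i' : Fin n) h1 (j' : Fin n) h2
    rw [hsgn _ i'.2, hsgn _ j'.2] at this
    exact mul_left_cancel₀ hsK this
  · intro i' hi' k' hk'
    have h1 : (i' : Fin n) ∈ σ := Finset.mem_subtype.mp hi'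
    have h2 : (k' : Fin n) ∉ σ := fun h => hk' (Finset.mem_subtype.mpr h)
    have h3 := hσ.2.2 (i' : Fin n) h1 (k' : Fin n) h2
    rw [hsgn _ i'.2, hsgn _ k'.2] at h3
    have h4 : Real.sign K * Real.sign (sdet W' θ σ' ⟨(k' : Fin n), k'.2⟩) =
        Real.sign K * (- Real.sign (sdet W' θ σ' ⟨(i' : Fin n), i'.2⟩)) := by
      rw [h3]; ring
    exact mul_left_cancel₀ hsK h4
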